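/- Let R be a commutative ℂ-algebra, let f, φ₁, …, φ_k ∈ R and set I = (φ₁,…,φ_k). Let Der(R) be the R-module of ℂ-linear derivations of R, and let N ⊆ R^{k+1} be the image of the R-linear map Der(R) → R^{k+1} given by δ ↦ (δ(f), δ(φ₁), …, δ(φ_k)). Assume that φ₁, …, φ_k is a regular sequence on the R-module R^{k+1}/N. Then every derivation ξ ∈ Der(R) satisfying ξ(f) ∈ I and ξ(φᵢ) ∈ I for all i = 1,…,k belongs to Θ^T := {η ∈ Der(R) : η(φ₁) = ⋯ = η(φ_k) = 0} + I·Der(R). -/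

import Mathlib

section Auxiliary

open RingTheory.Sequence Submodule Function Finset Pointwise

lemma antisymm_lift {R M M' : Type*} [CommRing R] [AddCommGroup M] [Module R M]
    [AddCommGroup M'] [Module R M'] (π : M →ₗ[R] M') (hπ : Function.Surjective π)
    {n : ℕ} (b : Fin n → Fin n → M') (hb1 : ∀ i j, b i j = - b j i) (hb2 : ∀ i, b i i = 0) :
    ∃ a : Fin n → Fin n → M, (∀ i j, a i j = - a j i) ∧ (∀ i, a i i = 0) ∧
      ∀ i j, π (a i j) = b i j := by
  choose g hg using hπ
  refine ⟨fun i j => if i < j then g (b i j) else if j < i then - g (b j i) else 0,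
    ?_, ?_, ?_⟩
  · intro i j
    rcases lt_trichotomy i j with h | h | h
    · simp [h, asymm h]
    · subst h; simp
    · simp [h, asymm h]
  · intro i; simp
  · intro i j
    rcases lt_trichotomy i j with h | h | h
    · simp [h, asymm h, hg]
    · subst h; simp [hb2 i]
    · simp [h, asymm h, hg, ← hb1 i j]

lemma sum_mul_smul_antisymm {R M : Type*} [CommRing R] [AddCommGroup M] [Module R M]
    {n : ℕ} (φ : Fin n → R) (a : Fin n → Fin n → M)
    (h1 : ∀ i j, a i j = - a j i) (h2 : ∀ i, a i i = 0) :
    ∑ j : Fin n, ∑ i : Fin n, (φ j * φ i) • a j i = 0 := by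
  rw [← Finset.sum_product']
  refine Finset.sum_ninvolution Prod.swap ?_ ?_ (fun _ => Finset.mem_univ _) (fun _ => rfl)
  · intro p
    have : a p.2 p.1 = - a p.1 p.2 := h1 _ _
    simp only [Prod.fst_swap, Prod.snd_swap, this, mul_comm (φ p.2) (φ p.1), smul_neg,
      add_neg_cancel]
  · intro p hp hswap
    apply hp
    have : p.1 = p.2 := congrArg Prod.fst hswap.symm
    rw [this, h2, smul_zero]

/-- First Koszul syzygies of a weakly regular sequence are generated by the trivial
(antisymmetric) ones. -/
lemma koszul_syzygy {R : Type} [CommRing R] (n : ℕ) :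
    ∀ {M : Type} [AddCommGroup M] [Module R M] (φ : Fin n → R),
      RingTheory.Sequence.IsWeaklyRegular M (List.ofFn φ) →
      ∀ m : Fin n → M, ∑ j, φ j • m j = 0 →
      ∃ a : Fin n → Fin n → M, (∀ i j, a i j = - a j i) ∧ (∀ i, a i i = 0) ∧
        ∀ j, m j = ∑ i, φ i • a j i := by
  induction n with
  | zero =>
    intro M _ _ φ _ m _
    exact ⟨fun i => i.elim0, fun i => i.elim0, fun i => i.elim0, fun i => i.elim0⟩
  | succ n ih =>
    intro M _ _ φ hreg m hm
    rw [List.ofFn_succ, isWeaklyRegular_cons_iff] at hreg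
    obtain ⟨h0, htail⟩ := hreg
    set p : Submodule R M := φ 0 • ⊤ with hp
    have hm' : φ 0 • m 0 + ∑ j : Fin n, φ j.succ • m j.succ = 0 := by
      rw [← Fin.sum_univ_succ (fun j => φ j • m j)]; exact hm
    have hq : ∑ j : Fin n, φ j.succ • p.mkQ (m j.succ) = 0 := by
      have : ∑ j : Fin n, φ j.succ • p.mkQ (m j.succ)
          = p.mkQ (∑ j : Fin n, φ j.succ • m j.succ) := by
        rw [map_sum]; simp
      rw [this]
      have h2 : (∑ j : Fin n, φ j.succ • m j.succ) = - (φ 0 • m 0) := by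
        linear_combination (norm := module) hm'
      rw [h2, map_neg, neg_eq_zero, Submodule.mkQ_apply, Submodule.Quotient.mk_eq_zero]
      exact Submodule.smul_mem_pointwise_smul _ _ _ Submodule.mem_top
    obtain ⟨abar, ha1, ha2, ha3⟩ :=
      ih (M := QuotSMulTop (φ 0) M) (fun i => φ i.succ) htail (fun j => p.mkQ (m j.succ)) hq
    obtain ⟨a', h1', h2', h3'⟩ := antisymm_lift p.mkQ (Submodule.mkQ_surjective p) abar ha1 ha2
    have hbex : ∀ j : Fin n, ∃ u : M, m j.succ = ∑ i, φ i.succ • a' j i + φ 0 • u := by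
      intro j
      have hz : p.mkQ (m j.succ - ∑ i, φ i.succ • a' j i) = 0 := by
        rw [map_sub, map_sum, ha3 j]
        simp [h3']
      rw [Submodule.mkQ_apply, Submodule.Quotient.mk_eq_zero, hp, ← SetLike.mem_coe,
        Submodule.coe_pointwise_smul, Set.mem_smul_set] at hz
      obtain ⟨u, -, hu⟩ := hz
      exact ⟨u, by linear_combination (norm := module) hu.symm⟩
    choose b hb using hbex
    refine ⟨Fin.cons (Fin.cons 0 fun i => - b i) (fun j => Fin.cons (b j) (a' j)), ?_, ?_, ?_⟩
    · intro i j
      refine Fin.cases ?_ (fun i' => ?_) i <;> refine Fin.cases ?_ (fun j' => ?_) j <;>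
        simp only [Fin.cons_succ, Fin.cons_zero] <;>
        first
          | simp
          | exact h1' i' j'
    · intro i
      refine Fin.cases ?_ (fun i' => ?_) i <;> simp only [Fin.cons_succ, Fin.cons_zero] <;>
        first
          | rfl
          | exact h2' i'
    · intro j
      refine Fin.cases ?_ (fun j' => ?_) j
      · -- j = 0
        have hsum0 : ∑ j : Fin n, ∑ i : Fin n, (φ j.succ * φ i.succ) • a' j i = 0 :=
          sum_mul_smul_antisymm (fun i => φ i.succ) a' h1' h2'
        have key : φ 0 • (m 0 + ∑ j : Fin n, φ j.succ • b j) = φ 0 • (0 : M) := by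
          have expand : ∑ j : Fin n, φ j.succ • m j.succ
              = ∑ j : Fin n, ∑ i : Fin n, (φ j.succ * φ i.succ) • a' j i
                + φ 0 • ∑ j : Fin n, φ j.succ • b j := by
            rw [Finset.smul_sum, ← Finset.sum_add_distrib]
            refine Finset.sum_congr rfl fun j _ => ?_
            rw [hb j, smul_add, Finset.smul_sum]
            congr 1
            · exact Finset.sum_congr rfl fun i _ => (mul_smul _ _ _).symm
            · rw [smul_comm]
          rw [smul_zero, smul_add]
          have := hm'
          rw [expand, hsum0, zero_add] at this
          linear_combination (norm := module) this
        have := h0 key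
        have hm0 : m 0 = - ∑ j : Fin n, φ j.succ • b j := by
          linear_combination (norm := module) this
        rw [hm0, Fin.sum_univ_succ]
        simp [Finset.sum_neg_distrib]
      · -- j = succ
        rw [Fin.sum_univ_succ]
        simp only [Fin.cons_succ, Fin.cons_zero]
        rw [hb j']
        abel

end Auxiliary



/-- Evaluation of a `ℂ`-linear derivation of `R` at an element `x : R`,
as an `R`-linear map `Der(R) → R`. -/
def derEval (R : Type) [CommRing R] [Algebra ℂ R] (x : R) :
    Derivation ℂ R R →ₗ[R] R where
  toFun δ := δ x
  map_add' _ _ := rfl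
  map_smul' _ _ := rfl

/-- **Theorem (logarithmic vector fields mapping into the ideal are trivial).**
Let `R` be a commutative `ℂ`-algebra, `f, φ₁, …, φ_k ∈ R`, `I = (φ₁,…,φ_k)`,
and let `N ⊆ R^{k+1}` be the image of `Der(R) → R^{k+1}`,
`δ ↦ (δ f, δ φ₁, …, δ φ_k)`. If `φ₁, …, φ_k` is a regular sequence on
`R^{k+1}/N`, then every derivation `ξ` with `ξ f ∈ I` and `ξ φᵢ ∈ I` for all
`i` lies in `Θᵀ = {η : η φ₁ = ⋯ = η φ_k = 0} + I·Der(R)`. -/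
theorem derivation_mem_trivial_of_maps_into_ideal
    (R : Type) [CommRing R] [Algebra ℂ R] (k : ℕ) (f : R) (φ : Fin k → R)
    (I : Ideal R) (hI : I = Ideal.span (Set.range φ))
    (N : Submodule R (Fin (k + 1) → R))
    (hN : N = LinearMap.range (LinearMap.pi fun i => derEval R ((Fin.cons f φ : Fin (k + 1) → R) i)))
    (hreg : RingTheory.Sequence.IsRegular ((Fin (k + 1) → R) ⧸ N) (List.ofFn φ))
    (ξ : Derivation ℂ R R) (hf : ξ f ∈ I) (hφ : ∀ i, ξ (φ i) ∈ I) :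
    ξ ∈ (⨅ i, LinearMap.ker (derEval R (φ i))) ⊔
        I • (⊤ : Submodule R (Derivation ℂ R R)) := by
  -- the image of ξ
  set Φ : Derivation ℂ R R →ₗ[R] (Fin (k + 1) → R) :=
    LinearMap.pi fun i => derEval R ((Fin.cons f φ : Fin (k + 1) → R) i) with hΦ
  set v : Fin (k + 1) → R := Φ ξ with hv
  have hvN : v ∈ N := by rw [hN]; exact ⟨ξ, rfl⟩
  have hvI : ∀ i, v i ∈ Ideal.span (Set.range φ) := by
    intro i
    refine Fin.cases ?_ (fun i' => ?_) i
    · show ξ ((Fin.cons f φ : Fin (k + 1) → R) 0) ∈ _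
      rw [Fin.cons_zero, ← hI]; exact hf
    · show ξ ((Fin.cons f φ : Fin (k + 1) → R) i'.succ) ∈ _
      rw [Fin.cons_succ, ← hI]; exact hφ i'
  -- write v = ∑ φ j • w j
  have hw : ∀ i, ∃ c : Fin k → R, ∑ j, c j • φ j = v i := by
    intro i
    exact (Submodule.mem_span_range_iff_exists_fun R).mp (hvI i)
  choose c hc using hw
  set w : Fin k → (Fin (k + 1) → R) := fun j i => c i j with hwdef
  have hvw : ∑ j, φ j • w j = v := by
    funext i
    rw [Finset.sum_apply]
    rw [← hc i]
    exact Finset.sum_congr rfl fun j _ => by simp [hwdef, mul_comm]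
  -- pass to the quotient and apply the Koszul lemma
  have hq : ∑ j, φ j • N.mkQ (w j) = 0 := by
    have : ∑ j, φ j • N.mkQ (w j) = N.mkQ (∑ j, φ j • w j) := by rw [map_sum]; simp
    rw [this, hvw, Submodule.mkQ_apply, Submodule.Quotient.mk_eq_zero]
    exact hvN
  obtain ⟨abar, ha1, ha2, ha3⟩ :=
    koszul_syzygy k φ hreg.toIsWeaklyRegular (fun j => N.mkQ (w j)) hq
  obtain ⟨a, h1, h2, h3⟩ := antisymm_lift N.mkQ (Submodule.mkQ_surjective N) abar ha1 ha2
  -- the correction terms n j lie in N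
  set nn : Fin k → (Fin (k + 1) → R) := fun j => w j - ∑ i, φ i • a j i with hnn
  have hnN : ∀ j, nn j ∈ N := by
    intro j
    have : N.mkQ (nn j) = 0 := by
      rw [hnn]
      simp only [map_sub, map_sum, map_smul, h3]
      rw [← ha3 j]
      simp
    rwa [Submodule.mkQ_apply, Submodule.Quotient.mk_eq_zero] at this
  -- v = ∑ φ j • nn j
  have hvnn : ∑ j, φ j • nn j = v := by
    have hanti : ∑ j, ∑ i, (φ j * φ i) • a j i = 0 := sum_mul_smul_antisymm φ a h1 h2
    calc ∑ j, φ j • nn j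
        = ∑ j, (φ j • w j - ∑ i, (φ j * φ i) • a j i) := by
          refine Finset.sum_congr rfl fun j _ => ?_
          rw [hnn, smul_sub, Finset.smul_sum]
          congr 1
          exact Finset.sum_congr rfl fun i _ => (mul_smul _ _ _).symm
      _ = ∑ j, φ j • w j - ∑ j, ∑ i, (φ j * φ i) • a j i := Finset.sum_sub_distrib _ _
      _ = v := by rw [hanti, hvw, sub_zero]
  -- pick derivations mapping to the nn j
  have hδ : ∀ j, ∃ δ : Derivation ℂ R R, Φ δ = nn j := by
    intro j
    have := hnN j
    rw [hN] at this
    exact this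
  choose δ hδ using hδ
  -- assemble
  have hφI : ∀ j, φ j ∈ I := fun j => hI ▸ Ideal.subset_span ⟨j, rfl⟩
  have hsum_mem : ∑ j, φ j • δ j ∈ I • (⊤ : Submodule R (Derivation ℂ R R)) :=
    Submodule.sum_mem _ fun j _ => Submodule.smul_mem_smul (hφI j) trivial
  have hη : ξ - ∑ j, φ j • δ j ∈ ⨅ i, LinearMap.ker (derEval R (φ i)) := by
    refine Submodule.mem_iInf _ |>.mpr fun i => ?_
    have hΦη : Φ (ξ - ∑ j, φ j • δ j) = 0 := by
      rw [map_sub, map_sum]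
      simp only [map_smul, hδ]
      rw [hvnn, ← hv, sub_self]
    have := congrFun hΦη i.succ
    have h0 : (ξ - ∑ j, φ j • δ j) ((Fin.cons f φ : Fin (k + 1) → R) i.succ) = 0 := this
    rw [Fin.cons_succ] at h0
    exact h0
  have : ξ = (ξ - ∑ j, φ j • δ j) + ∑ j, φ j • δ j := by abel
  rw [this]
  exact Submodule.add_mem_sup hη hsum_mem
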